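/- arXiv:1706.02887 — 2 statements merged into one kernel-verified Lean document; each statement's English description precedes it below -/
import Mathlib

section
/- Let Λ be the Lebesgue measure on ℝ^d, let C be a symmetric positive-definite d×d real matrix, m ∈ ℝ^d, and let P be the Gaussian measure on ℝ^d with density x ↦ (2π)^{-d/2} (det C)^{-1/2} exp(−½ (x−m)ᵀ C⁻¹ (x−m)) with respect to Λ. Let f : ℝ^d → ℝ be measurable with every level set Λ-null (so f̂^< = f̂^≤ =: f̂) and with f̂(m) < ∞. Set p = P({x | f(x) < f(m)}). Then for every q ∈ [0,p]: P({x | f̂(x) + (2π)^{d/2}·√(det C)·(p − q) ≤ f̂(m)}) ≥ q, and ∫ max{0, f̂(m) − f̂(x)} dP(x) ≥ (2π)^{d/2}·√(det C)·p²/2. -/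
open MeasureTheory Set Matrix Filter Topology
open scoped ENNReal


lemma levelset_bound {X : Type*} [MeasurableSpace X] (μ : Measure X)
    (f : X → ℝ) (hf : Measurable f) (a : ℝ)
    (hlevel : ∀ y : ℝ, μ {x | f x = y} = 0)
    (hfin : μ {x | f x < a} < ⊤) (s : ℝ≥0∞) (hs : s ≤ μ {x | f x < a}) :
    μ {x | f x < a ∧ s < μ {x' | f x' < f x}} + s ≤ μ {x | f x < a} := by
  set F : ℝ → ℝ≥0∞ := fun y => μ {x | f x < y} with hF
  have hFmono : Monotone F := by
    intro y y' h
    exact measure_mono (fun x hx => lt_of_lt_of_le hx h)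
  set V : ℝ≥0∞ := F a with hV
  set T : Set ℝ := {y | s < F y} with hT
  set D : Set X := {x | f x < a ∧ s < F (f x)} with hD
  have hDsubS : D ⊆ {x | f x < a} := fun x hx => hx.1
  rcases eq_empty_or_nonempty T with hTe | hTne
  · -- T empty : D empty
    have : D = ∅ := by
      ext x
      simp only [hD, mem_setOf_eq, mem_empty_iff_false, iff_false, not_and]
      intro _ hsx
      exact absurd (show f x ∈ T from hsx) (by simp [hTe])
    rw [this, measure_empty, zero_add]
    exact hs
  by_cases hbdd : BddBelow T
  · set t : ℝ := sInf T with ht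
    have htle : ∀ y ∈ T, t ≤ y := fun y hy => csInf_le hbdd hy
    by_cases hta : a ≤ t
    · -- D empty
      have : D = ∅ := by
        ext x
        simp only [hD, mem_setOf_eq, mem_empty_iff_false, iff_false, not_and]
        intro hxa hsx
        exact absurd hxa (not_lt.2 ((hta.trans (htle _ hsx))))
      rw [this, measure_empty, zero_add]
      exact hs
    push_neg at hta
    -- Step: s ≤ F t
    have hst : s ≤ F t := by
      have hat : 0 < a - t := by linarith
      set E : ℕ → Set X := fun n => {x | f x < t + (a - t) / (n + 1)} with hE
      have hEanti : Antitone E := by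
        intro n n' h x hx
        simp only [hE, mem_setOf_eq] at hx ⊢
        have hle2 : (a - t) / (n' + 1) ≤ (a - t) / (n + 1) := by
          apply div_le_div_of_nonneg_left hat.le (by positivity)
          exact_mod_cast Nat.succ_le_succ h
        linarith
      have hEmeas : ∀ n, NullMeasurableSet (E n) μ :=
        fun n => (hf measurableSet_Iio).nullMeasurableSet
      have hE0 : μ (E 0) ≠ ⊤ := by
        have : E 0 ⊆ {x | f x < a} := by
          intro x hx
          simp only [hE, mem_setOf_eq] at hx
          have : t + (a - t) / (0 + 1) = a := by ring
          simpa [this] using hx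
        exact ((measure_mono this).trans_lt hfin).ne
      have hInter : ⋂ n, E n = {x | f x ≤ t} := by
        ext x
        simp only [mem_iInter, hE, mem_setOf_eq]
        constructor
        · intro h
          by_contra hc
          push_neg at hc
          obtain ⟨n, hn⟩ := exists_nat_gt ((a - t) / (f x - t))
          have hfxt : 0 < f x - t := by linarith
          have h1 : (a - t) / (n + 1) < f x - t := by
            rw [div_lt_iff₀ (by positivity)]
            have h2 : (a - t) / (f x - t) < n + 1 := by linarith
            calc a - t = ((a - t) / (f x - t)) * (f x - t) := by field_simp
            _ < (n + 1) * (f x - t) := by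
                apply mul_lt_mul_of_pos_right h2 hfxt
            _ = (f x - t) * (n + 1) := by ring
          have := h n
          linarith
        · intro h n
          have : 0 < (a - t) / ((n : ℝ) + 1) := by positivity
          linarith
      have htendsto := tendsto_measure_iInter_atTop hEmeas hEanti ⟨0, hE0⟩
      rw [hInter] at htendsto
      have hle : ∀ n, s ≤ μ (E n) := by
        intro n
        have h1 : t < t + (a - t) / (n + 1) := by
          have : 0 < (a - t) / ((n : ℝ) + 1) := by positivity
          linarith
        obtain ⟨y, hyT, hy⟩ := (csInf_lt_iff hbdd hTne).1 (by rw [← ht]; exact h1)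
        calc s ≤ F y := le_of_lt hyT
        _ ≤ μ (E n) := hFmono hy.le
      have h2 : s ≤ μ {x | f x ≤ t} := ge_of_tendsto' htendsto hle
      have h3 : μ {x | f x ≤ t} ≤ F t := by
        have : {x | f x ≤ t} ⊆ {x | f x < t} ∪ {x | f x = t} := by
          intro x hx
          have hx' : f x ≤ t := hx
          rcases lt_or_eq_of_le hx' with h | h
          · exact Or.inl h
          · exact Or.inr h
        calc μ {x | f x ≤ t} ≤ μ ({x | f x < t} ∪ {x | f x = t}) := measure_mono this
        _ ≤ μ {x | f x < t} + μ {x | f x = t} := measure_union_le _ _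
        _ = F t := by rw [hlevel t, add_zero]
      exact h2.trans h3
    -- disjoint union bound
    have hdisj : Disjoint D {x | f x < t} := by
      rw [Set.disjoint_left]
      intro x hxD hxt
      exact absurd (htle _ hxD.2) (not_le.2 hxt)
    have hsub : D ∪ {x | f x < t} ⊆ {x | f x < a} := by
      intro x hx
      rcases hx with h | h
      · exact h.1
      · exact lt_trans h hta
    calc μ D + s ≤ μ D + F t := add_le_add le_rfl hst
    _ = μ (D ∪ {x | f x < t}) := (measure_union hdisj (hf measurableSet_Iio)).symm
    _ ≤ μ {x | f x < a} := measure_mono hsub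
  · -- not bounded below : s = 0
    have hall : ∀ y : ℝ, s < F y := by
      intro y
      rw [bddBelow_def] at hbdd
      push_neg at hbdd
      obtain ⟨z, hzT, hz⟩ := hbdd y
      exact lt_of_lt_of_le hzT (hFmono hz.le)
    have hs0 : s = 0 := by
      set E : ℕ → Set X := fun n => {x | f x < a - n} with hE
      have hEanti : Antitone E := by
        intro n n' h x hx
        simp only [hE, mem_setOf_eq] at hx ⊢
        have : (n : ℝ) ≤ n' := Nat.cast_le.2 h
        linarith
      have hE0 : μ (E 0) ≠ ⊤ := by
        have : E 0 ⊆ {x | f x < a} := by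
          intro x hx; simpa [hE] using hx
        exact ((measure_mono this).trans_lt hfin).ne
      have hInter : ⋂ n, E n = ∅ := by
        ext x
        simp only [mem_iInter, hE, mem_setOf_eq, mem_empty_iff_false, iff_false, not_forall, not_lt]
        obtain ⟨n, hn⟩ := exists_nat_gt (a - f x)
        exact ⟨n, by linarith⟩
      have hEmeas : ∀ n, NullMeasurableSet (E n) μ :=
        fun n => (hf measurableSet_Iio).nullMeasurableSet
      have htendsto := tendsto_measure_iInter_atTop hEmeas hEanti ⟨0, hE0⟩
      rw [hInter, measure_empty] at htendsto
      have : s ≤ 0 := ge_of_tendsto' htendsto (fun n => (hall (a - n)).le)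
      exact le_antisymm this (zero_le)
    rw [hs0, add_zero]
    exact measure_mono hDsubS


lemma posdef_quad_lb (d : ℕ) (hd : 1 ≤ d) (M : Matrix (Fin d) (Fin d) ℝ)
    (hM : M.PosDef) :
    ∃ ε : ℝ, 0 < ε ∧ ∀ v : Fin d → ℝ, ε * (v ⬝ᵥ v) ≤ v ⬝ᵥ M.mulVec v := by
  set g : (Fin d → ℝ) → ℝ := fun v => v ⬝ᵥ M.mulVec v with hg
  have hgpos : ∀ v : Fin d → ℝ, v ≠ 0 → 0 < g v := by
    intro v hv
    have := hM.re_dotProduct_pos (x := v) hv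
    simpa using this
  have hgcont : Continuous g := by
    simp only [hg, dotProduct, Matrix.mulVec, dotProduct]
    fun_prop
  have hncont : Continuous (fun v : Fin d → ℝ => v ⬝ᵥ v) := by
    simp only [dotProduct]
    fun_prop
  set K : Set (Fin d → ℝ) := {v | v ⬝ᵥ v = 1} with hK
  have hKclosed : IsClosed K := isClosed_eq hncont continuous_const
  have hKbdd : Bornology.IsBounded K := by
    apply (Metric.isBounded_closedBall (x := (0 : Fin d → ℝ)) (r := 1)).subset
    intro v hv
    rw [Metric.mem_closedBall, dist_zero_right]
    rw [pi_norm_le_iff_of_nonneg (by norm_num)]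
    intro i
    have h1 : v i * v i ≤ v ⬝ᵥ v := by
      rw [dotProduct]
      exact Finset.single_le_sum (fun j _ => mul_self_nonneg (v j)) (Finset.mem_univ i)
    rw [hK, mem_setOf_eq] at hv
    rw [Real.norm_eq_abs]
    exact abs_le_one_iff_mul_self_le_one.2 (by linarith)
  have hKcomp : IsCompact K := Metric.isCompact_of_isClosed_isBounded hKclosed hKbdd
  have hKne : K.Nonempty := by
    refine ⟨Pi.single ⟨0, hd⟩ 1, ?_⟩
    rw [hK, mem_setOf_eq]
    simp [dotProduct_single]
  obtain ⟨v₀, hv₀K, hmin⟩ := hKcomp.exists_isMinOn hKne hgcont.continuousOn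
  set ε := g v₀ with hε
  have hv₀ne : v₀ ≠ 0 := by
    intro h
    rw [hK, h] at hv₀K
    simp only [mem_setOf_eq, zero_dotProduct] at hv₀K
    norm_num at hv₀K
  refine ⟨ε, hgpos v₀ hv₀ne, ?_⟩
  intro v
  by_cases hv : v = 0
  · simp [hv, hg]
  · have hvv : 0 < v ⬝ᵥ v := by
      have h0 : (0:ℝ) ≤ v ⬝ᵥ v := by
        rw [dotProduct]
        exact Finset.sum_nonneg (fun j _ => mul_self_nonneg (v j))
      rcases h0.lt_or_eq with h | h
      · exact h
      · exact absurd ((dotProduct_self_eq_zero).1 h.symm) hv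
    set r := Real.sqrt (v ⬝ᵥ v) with hr
    have hrpos : 0 < r := Real.sqrt_pos.2 hvv
    have hrr : r * r = v ⬝ᵥ v := Real.mul_self_sqrt hvv.le
    set u : Fin d → ℝ := r⁻¹ • v with hu
    have huK : u ∈ K := by
      rw [hK, mem_setOf_eq, hu]
      rw [smul_dotProduct, dotProduct_smul, smul_eq_mul, smul_eq_mul, ← hrr]
      have hne := hrpos.ne'
      field_simp
    have hgu : ε ≤ g u := hmin huK
    have hveq : v = r • u := by
      rw [hu, smul_smul, mul_inv_cancel₀ hrpos.ne', one_smul]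
    have hgv : g v = (r * r) * g u := by
      rw [hveq, hg]
      simp only [smul_dotProduct, Matrix.mulVec_smul, dotProduct_smul, smul_eq_mul]
      ring
    show ε * (v ⬝ᵥ v) ≤ g v
    rw [hgv, ← hrr]
    calc ε * (r * r) ≤ g u * (r * r) := by
          apply mul_le_mul_of_nonneg_right hgu (by positivity)
    _ = r * r * g u := by ring

/-- Decrease guarantee for a Gaussian sample `x ∼ N(m, C)` on `ℝ^d`
(with Lebesgue reference measure): if all level sets of `f` are null and
`f̂(m) < ∞`, then for `p = P(S_f^<(m))` and every `q ∈ [0, p]`, the `q`-quantile of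
the `f̂`-decrease is at least `(2π)^{d/2}·√(det C)·(p − q)`, and the expected
decrease satisfies `∫ max{0, f̂(m) − f̂(x)} dP ≥ (2π)^{d/2}·√(det C)·p²/2`. -/
theorem gaussian_decrease
    (d : ℕ) (hd : 1 ≤ d)
    (C : Matrix (Fin d) (Fin d) ℝ) (hC : C.PosDef)
    (m : Fin d → ℝ)
    (P : Measure (Fin d → ℝ))
    (hP : P = volume.withDensity fun x =>
      ENNReal.ofReal ((2 * Real.pi) ^ (-(d : ℝ) / 2) * (Real.sqrt C.det)⁻¹ *
        Real.exp (-(1 / 2) * ((x - m) ⬝ᵥ C⁻¹.mulVec (x - m)))))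
    (f : (Fin d → ℝ) → ℝ) (hf : Measurable f)
    (hlevel : ∀ y : ℝ, volume {x : Fin d → ℝ | f x = y} = 0)
    (hfin : volume {x : Fin d → ℝ | f x < f m} < ⊤) :
    (∀ q ∈ Icc (0 : ℝ) (P {x | f x < f m}).toReal,
      ENNReal.ofReal q ≤
        P {x | volume {x' | f x' < f x}
            + ENNReal.ofReal ((2 * Real.pi) ^ ((d : ℝ) / 2) * Real.sqrt C.det *
                ((P {x | f x < f m}).toReal - q))
            ≤ volume {x' | f x' < f m}}) ∧
    (2 * Real.pi) ^ ((d : ℝ) / 2) * Real.sqrt C.det * (P {x | f x < f m}).toReal ^ 2 / 2 ≤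
      ∫ x, max 0 ((volume {x' | f x' < f m}).toReal - (volume {x' | f x' < f x}).toReal) ∂P := by
  -- basic notation
  set S : Set (Fin d → ℝ) := {x | f x < f m} with hSdef
  have hSmeas : MeasurableSet S := hf measurableSet_Iio
  set F : ℝ → ℝ≥0∞ := fun y => volume {x : Fin d → ℝ | f x < y} with hFdef
  have hFmono : Monotone F := fun y y' h => measure_mono (fun x hx => lt_of_lt_of_le hx h)
  have hFmeas : Measurable F := hFmono.measurable
  have hVne : volume S ≠ ⊤ := hfin.ne
  -- constants
  set c₀ : ℝ := (2 * Real.pi) ^ (-(d : ℝ) / 2) * (Real.sqrt C.det)⁻¹ with hc₀def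
  set Kc : ℝ := (2 * Real.pi) ^ ((d : ℝ) / 2) * Real.sqrt C.det with hKcdef
  have h2pi : (0:ℝ) < 2 * Real.pi := by positivity
  have hsq : 0 < Real.sqrt C.det := Real.sqrt_pos.2 hC.det_pos
  have hc₀pos : 0 < c₀ := mul_pos (Real.rpow_pos_of_pos h2pi _) (inv_pos.2 hsq)
  have hKpos : 0 < Kc := mul_pos (Real.rpow_pos_of_pos h2pi _) hsq
  have hcK : c₀ * Kc = 1 := by
    rw [hc₀def, hKcdef]
    have h1 : (2 * Real.pi) ^ (-(d:ℝ) / 2) = ((2 * Real.pi) ^ ((d:ℝ) / 2))⁻¹ := by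
      rw [neg_div, Real.rpow_neg h2pi.le]
    rw [h1]
    have h2 : (2 * Real.pi) ^ ((d:ℝ) / 2) ≠ 0 := (Real.rpow_pos_of_pos h2pi _).ne'
    field_simp
  set c : ℝ≥0∞ := ENNReal.ofReal c₀ with hcdef
  have hcne0 : c ≠ 0 := by
    rw [hcdef]
    simp only [ne_eq, ENNReal.ofReal_eq_zero, not_le]
    exact hc₀pos
  have hcnetop : c ≠ ⊤ := ENNReal.ofReal_ne_top
  -- density
  set dens : (Fin d → ℝ) → ℝ≥0∞ := fun x =>
    ENNReal.ofReal (c₀ * Real.exp (-(1 / 2) * ((x - m) ⬝ᵥ C⁻¹.mulVec (x - m)))) with hdensdef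
  have hPdens : P = volume.withDensity dens := hP
  have hQnonneg : ∀ x : Fin d → ℝ, 0 ≤ (x - m) ⬝ᵥ C⁻¹.mulVec (x - m) := by
    intro x
    have := (hC.inv.posSemidef).re_dotProduct_nonneg (x := x - m)
    simpa using this
  have hdensle : ∀ x, dens x ≤ c := by
    intro x
    rw [hdensdef, hcdef]
    apply ENNReal.ofReal_le_ofReal
    have h1 : Real.exp (-(1 / 2) * ((x - m) ⬝ᵥ C⁻¹.mulVec (x - m))) ≤ 1 := by
      rw [Real.exp_le_one_iff]
      nlinarith [hQnonneg x]
    nlinarith [hc₀pos]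
  have hdensmeas : Measurable dens := by
    have hcont : Continuous fun x : Fin d → ℝ =>
        c₀ * Real.exp (-(1 / 2) * ((x - m) ⬝ᵥ C⁻¹.mulVec (x - m))) := by
      simp only [dotProduct, Matrix.mulVec, dotProduct, Pi.sub_apply]
      fun_prop
    exact hcont.measurable.ennreal_ofReal
  -- comparison P ≤ c • volume
  have hPle : ∀ {A : Set (Fin d → ℝ)}, MeasurableSet A → P A ≤ c * volume A := by
    intro A hA
    rw [hPdens, withDensity_apply _ hA]
    calc ∫⁻ x in A, dens x ≤ ∫⁻ _x in A, c := lintegral_mono (fun x => hdensle x)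
    _ = c * volume A := setLIntegral_const A c
  -- P is a finite measure
  obtain ⟨ε, hεpos, hquad⟩ := posdef_quad_lb d hd C⁻¹ hC.inv
  have hPuniv : P univ < ⊤ := by
    rw [hPdens, withDensity_apply _ MeasurableSet.univ, Measure.restrict_univ]
    set G : (Fin d → ℝ) → ℝ := fun x => c₀ * ∏ i, Real.exp (-(ε/2) * (x i - m i)^2) with hGdef
    have hGint : Integrable G := by
      apply Integrable.const_mul
      apply Integrable.fintype_prod (f := fun i (t : ℝ) => Real.exp (-(ε/2) * (t - m i)^2))
      intro i
      have h1 : Integrable (fun t : ℝ => Real.exp (-(ε/2) * t^2)) := by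
        simpa using integrable_exp_neg_mul_sq (by positivity : (0:ℝ) < ε/2)
      exact Integrable.comp_sub_right h1 (m i)
    have hle : ∀ x : Fin d → ℝ, dens x ≤ ENNReal.ofReal (G x) := by
      intro x
      rw [hdensdef]
      apply ENNReal.ofReal_le_ofReal
      apply mul_le_mul_of_nonneg_left _ hc₀pos.le
      rw [← Real.exp_sum]
      apply Real.exp_le_exp.2
      have h2 := hquad (x - m)
      have h3 : (x - m) ⬝ᵥ (x - m) = ∑ i, (x i - m i)^2 := by
        simp [dotProduct, Pi.sub_apply, sq]
      rw [h3] at h2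
      have heq : -(1/2) * (ε * ∑ i, (x i - m i)^2) = ∑ i, -(ε/2) * (x i - m i)^2 := by
        rw [Finset.mul_sum, Finset.mul_sum]
        apply Finset.sum_congr rfl
        intro i _
        ring
      rw [← heq]
      linarith
    calc ∫⁻ x, dens x ≤ ∫⁻ x, ENNReal.ofReal (G x) := lintegral_mono hle
    _ < ⊤ := by
        have hnn : 0 ≤ᵐ[volume (α := Fin d → ℝ)] G := by
          apply Eventually.of_forall
          intro x
          apply mul_nonneg hc₀pos.le
          exact Finset.prod_nonneg (fun i _ => (Real.exp_pos _).le)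
        exact (hasFiniteIntegral_iff_ofReal hnn).1 hGint.hasFiniteIntegral
  haveI hPfinite : IsFiniteMeasure P := ⟨hPuniv⟩
  have hPSne : P S ≠ ⊤ := measure_ne_top P S
  set p : ℝ := (P S).toReal with hpdef
  have hPSval : P S = ENNReal.ofReal p := (ENNReal.ofReal_toReal hPSne).symm
  constructor
  · -- Part 1 : quantile bound
    intro q hq
    obtain ⟨hq0, hqp⟩ := hq
    set ρ : ℝ≥0∞ := ENNReal.ofReal (Kc * (p - q)) with hρdef
    have hρne : ρ ≠ ⊤ := ENNReal.ofReal_ne_top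
    set E : Set (Fin d → ℝ) := {x | F (f x) + ρ ≤ volume S} with hEdef
    have hEmeas : MeasurableSet E := by
      have h1 : Measurable fun x => F (f x) + ρ := (hFmeas.comp hf).add_const ρ
      exact h1 measurableSet_Iic
    have hBbound : volume (S \ E) ≤ ρ := by
      by_cases hρV : volume S ≤ ρ
      · exact le_trans (measure_mono diff_subset) hρV
      · push_neg at hρV
        have hsle : volume S - ρ ≤ volume S := tsub_le_self
        have hkey := levelset_bound volume f hf (f m) hlevel hfin (volume S - ρ) hsle
        have hsub : S \ E ⊆
            {x | f x < f m ∧ volume S - ρ < volume {x' | f x' < f x}} := by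
          intro x hx
          obtain ⟨hx1, hx2⟩ := hx
          refine ⟨hx1, ?_⟩
          have h2 : volume S < F (f x) + ρ := not_le.1 hx2
          exact (ENNReal.sub_lt_iff_lt_right hρne hρV.le).2 h2
        calc volume (S \ E)
            ≤ volume {x | f x < f m ∧ volume S - ρ < volume {x' | f x' < f x}} :=
              measure_mono hsub
        _ ≤ volume S - (volume S - ρ) :=
              ENNReal.le_sub_of_add_le_right (hsle.trans_lt hfin).ne hkey
        _ = ρ := ENNReal.sub_sub_cancel hVne hρV.le
    have hPB : P (S \ E) ≤ ENNReal.ofReal (p - q) := by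
      calc P (S \ E) ≤ c * volume (S \ E) := hPle (hSmeas.diff hEmeas)
      _ ≤ c * ρ := mul_le_mul_right hBbound _
      _ = ENNReal.ofReal (c₀ * (Kc * (p - q))) := by
          rw [hρdef, hcdef, ← ENNReal.ofReal_mul hc₀pos.le]
      _ = ENNReal.ofReal (p - q) := by rw [← mul_assoc, hcK, one_mul]
    have hsplit : P S ≤ P E + ENNReal.ofReal (p - q) := by
      calc P S = P ((S ∩ E) ∪ (S \ E)) := by rw [Set.inter_union_diff]
      _ ≤ P (S ∩ E) + P (S \ E) := measure_union_le _ _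
      _ ≤ P E + ENNReal.ofReal (p - q) :=
          add_le_add (measure_mono inter_subset_right) hPB
    have hPSval2 : P S = ENNReal.ofReal q + ENNReal.ofReal (p - q) := by
      calc P S = ENNReal.ofReal p := hPSval
      _ = ENNReal.ofReal (q + (p - q)) := by ring_nf
      _ = ENNReal.ofReal q + ENNReal.ofReal (p - q) :=
          ENNReal.ofReal_add hq0 (by linarith)
    have hchain : ENNReal.ofReal q + ENNReal.ofReal (p - q)
        ≤ P E + ENNReal.ofReal (p - q) := hPSval2 ▸ hsplit
    have hfinal := (ENNReal.add_le_add_iff_right ENNReal.ofReal_ne_top).1 hchain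
    exact hfinal
  · -- Part 2 : expected decrease
    set ψ : (Fin d → ℝ) → ℝ≥0∞ := fun x => volume {x' | f x ≤ f x' ∧ f x' < f m} with hψdef
    set K2 : (Fin d → ℝ) × (Fin d → ℝ) → ℝ≥0∞ :=
      fun z => if f z.1 ≤ f z.2 ∧ f z.2 < f m then 1 else 0 with hK2def
    have hK2meas : Measurable K2 := by
      apply Measurable.ite _ measurable_const measurable_const
      exact (measurableSet_le (hf.comp measurable_fst) (hf.comp measurable_snd)).inter
        ((hf.comp measurable_snd) measurableSet_Iio)
    have hψ_eq : ∀ x, ψ x = ∫⁻ x', K2 (x, x') ∂volume := by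
      intro x
      have hA : MeasurableSet {x' | f x ≤ f x' ∧ f x' < f m} :=
        (measurableSet_le measurable_const hf).inter (hf measurableSet_Iio)
      show volume {x' | f x ≤ f x' ∧ f x' < f m} = ∫⁻ x', K2 (x, x')
      rw [← lintegral_indicator_one hA]
      apply lintegral_congr
      intro x'
      simp [hK2def, Set.indicator_apply, mem_setOf_eq]
    have hψle_V : ∀ x, ψ x ≤ volume S := by
      intro x
      exact measure_mono (fun z hz => hz.2)
    -- swap 1 : over P then volume
    have step1 : ∫⁻ x, ψ x ∂P = ∫⁻ x', ∫⁻ x, K2 (x, x') ∂P ∂volume := by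
      calc ∫⁻ x, ψ x ∂P = ∫⁻ x, ∫⁻ x', K2 (x, x') ∂volume ∂P := lintegral_congr hψ_eq
      _ = ∫⁻ x', ∫⁻ x, K2 (x, x') ∂P ∂volume :=
          lintegral_lintegral_swap hK2meas.aemeasurable
    have hinner_meas : Measurable fun x' => ∫⁻ x, K2 (x, x') ∂P :=
      hK2meas.lintegral_prod_left'
    set I : ℝ≥0∞ := ∫⁻ x', ∫⁻ x, K2 (x, x') ∂P ∂P with hIdef
    have hcomp : ∀ g : (Fin d → ℝ) → ℝ≥0∞, Measurable g →
        ∫⁻ y, g y ∂P ≤ c * ∫⁻ y, g y ∂volume := by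
      intro g hg
      rw [hPdens, lintegral_withDensity_eq_lintegral_mul _ hdensmeas hg]
      calc ∫⁻ y, (dens * g) y ∂volume ≤ ∫⁻ y, c * g y ∂volume :=
            lintegral_mono (fun y => mul_le_mul_left (hdensle y) _)
      _ = c * ∫⁻ y, g y ∂volume := lintegral_const_mul c hg
    have step2 : c⁻¹ * I ≤ ∫⁻ x', ∫⁻ x, K2 (x, x') ∂P ∂volume := by
      have h1 : I ≤ c * ∫⁻ x', ∫⁻ x, K2 (x, x') ∂P ∂volume :=
        hcomp _ hinner_meas
      calc c⁻¹ * I ≤ c⁻¹ * (c * ∫⁻ x', ∫⁻ x, K2 (x, x') ∂P ∂volume) :=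
            mul_le_mul_right h1 _
      _ = ∫⁻ x', ∫⁻ x, K2 (x, x') ∂P ∂volume := by
            rw [← mul_assoc, ENNReal.inv_mul_cancel hcne0 hcnetop, one_mul]
    -- symmetrization
    have hmeasind : Measurable fun x : Fin d → ℝ => (if f x < f m then (1:ℝ≥0∞) else 0) :=
      Measurable.ite (hf measurableSet_Iio) measurable_const measurable_const
    have hind : ∫⁻ x, (if f x < f m then (1:ℝ≥0∞) else 0) ∂P = P S := by
      rw [← lintegral_indicator_one hSmeas]
      apply lintegral_congr
      intro x
      simp [Set.indicator_apply, hSdef, mem_setOf_eq]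
    have hK2x : ∀ x, Measurable fun y => K2 (x, y) :=
      fun x => hK2meas.comp measurable_prodMk_left
    have hK2y : ∀ x, Measurable fun y => K2 (y, x) :=
      fun x => hK2meas.comp measurable_prodMk_right
    have houter1 : Measurable fun x => ∫⁻ y, K2 (x, y) ∂P := hK2meas.lintegral_prod_right'
    have houter2 : Measurable fun x => ∫⁻ y, K2 (y, x) ∂P := hK2meas.lintegral_prod_left'
    have hswap2 : ∫⁻ x, ∫⁻ y, K2 (x, y) ∂P ∂P = I :=
      lintegral_lintegral_swap hK2meas.aemeasurable
    have hsum : P S * P S ≤ 2 * I := by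
      have h1 : ∀ x y : Fin d → ℝ,
          (if f x < f m then (1:ℝ≥0∞) else 0) * (if f y < f m then 1 else 0)
            ≤ K2 (x, y) + K2 (y, x) := by
        intro x y
        by_cases hx : f x < f m
        · by_cases hy : f y < f m
          · rcases le_total (f x) (f y) with h | h
            · have : K2 (x, y) = 1 := by simp [hK2def, h, hy]
              rw [this]
              simp [hx, hy]
            · have : K2 (y, x) = 1 := by simp [hK2def, h, hx]
              rw [this]
              simp [hx, hy]
          · simp [hy]
        · simp [hx]
      calc P S * P S = (∫⁻ x, (if f x < f m then (1:ℝ≥0∞) else 0) ∂P) * P S := by rw [hind]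
      _ = ∫⁻ x, (if f x < f m then (1:ℝ≥0∞) else 0) * P S ∂P :=
          (lintegral_mul_const _ hmeasind).symm
      _ = ∫⁻ x, ∫⁻ y, (if f x < f m then (1:ℝ≥0∞) else 0) *
            (if f y < f m then 1 else 0) ∂P ∂P := by
          apply lintegral_congr
          intro x
          rw [lintegral_const_mul _ hmeasind, hind]
      _ ≤ ∫⁻ x, ∫⁻ y, (K2 (x, y) + K2 (y, x)) ∂P ∂P :=
          lintegral_mono (fun x => lintegral_mono (fun y => h1 x y))
      _ = ∫⁻ x, ((∫⁻ y, K2 (x, y) ∂P) + ∫⁻ y, K2 (y, x) ∂P) ∂P := by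
          apply lintegral_congr
          intro x
          rw [lintegral_add_left (hK2x x)]
      _ = (∫⁻ x, ∫⁻ y, K2 (x, y) ∂P ∂P) + ∫⁻ x, ∫⁻ y, K2 (y, x) ∂P ∂P :=
          lintegral_add_left houter1 _
      _ = I + I := by rw [hswap2]
      _ = 2 * I := (two_mul I).symm
    have hIge : ENNReal.ofReal (p * p / 2) ≤ I := by
      have h1 : ENNReal.ofReal (p * p) ≤ 2 * I := by
        calc ENNReal.ofReal (p * p) = ENNReal.ofReal p * ENNReal.ofReal p :=
              ENNReal.ofReal_mul ENNReal.toReal_nonneg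
        _ = P S * P S := by rw [← hPSval]
        _ ≤ 2 * I := hsum
      rw [ENNReal.ofReal_div_of_pos (by norm_num : (0:ℝ) < 2)]
      rw [ENNReal.div_le_iff_le_mul (Or.inl (by simp)) (Or.inl ENNReal.ofReal_ne_top)]
      calc ENNReal.ofReal (p * p) ≤ 2 * I := h1
      _ = I * ENNReal.ofReal 2 := by
          rw [mul_comm]
          congr 1
          simp [ENNReal.ofReal_ofNat]
    have hcinv : c⁻¹ = ENNReal.ofReal Kc := by
      rw [hcdef, ← ENNReal.ofReal_inv_of_pos hc₀pos]
      congr 1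
      field_simp
      linarith [hcK]
    have hmain : ENNReal.ofReal (Kc * p ^ 2 / 2) ≤ ∫⁻ x, ψ x ∂P := by
      calc ENNReal.ofReal (Kc * p ^ 2 / 2)
          = ENNReal.ofReal Kc * ENNReal.ofReal (p * p / 2) := by
            rw [← ENNReal.ofReal_mul hKpos.le]
            congr 1
            ring
      _ = c⁻¹ * ENNReal.ofReal (p * p / 2) := by rw [hcinv]
      _ ≤ c⁻¹ * I := mul_le_mul_right hIge _
      _ ≤ ∫⁻ x', ∫⁻ x, K2 (x, x') ∂P ∂volume := step2
      _ = ∫⁻ x, ψ x ∂P := step1.symm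
    -- convert to a real integral
    set Mx : (Fin d → ℝ) → ℝ :=
      fun x => max 0 ((volume S).toReal - (F (f x)).toReal) with hMxdef
    have hMmeas : Measurable Mx :=
      measurable_const.max (measurable_const.sub
        (ENNReal.measurable_toReal.comp (hFmeas.comp hf)))
    have hMnn : 0 ≤ᵐ[P] Mx := Eventually.of_forall (fun x => le_max_left _ _)
    have hint_eq : ∫ x, Mx x ∂P = (∫⁻ x, ENNReal.ofReal (Mx x) ∂P).toReal :=
      integral_eq_lintegral_of_nonneg_ae hMnn hMmeas.aestronglyMeasurable
    have hψle : ∀ x, ψ x ≤ ENNReal.ofReal (Mx x) := by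
      intro x
      by_cases hxa : f x < f m
      · have hseteq : {x' | f x ≤ f x' ∧ f x' < f m} = S \ {x' | f x' < f x} := by
          ext x'
          simp only [mem_setOf_eq, mem_diff, hSdef]
          constructor
          · rintro ⟨h1, h2⟩
            exact ⟨h2, not_lt.2 h1⟩
          · rintro ⟨h1, h2⟩
            exact ⟨not_lt.1 h2, h1⟩
        have hsub2 : {x' | f x' < f x} ⊆ S := fun z hz => lt_trans hz hxa
        have hFfin : F (f x) ≠ ⊤ := ((measure_mono hsub2).trans_lt hfin).ne
        have hψval : ψ x = volume S - F (f x) := by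
          rw [hψdef]
          simp only
          rw [hseteq, measure_diff hsub2 ((hf measurableSet_Iio).nullMeasurableSet) hFfin]
        rw [hψval]
        have hFleV : F (f x) ≤ volume S := measure_mono hsub2
        have h5 : (volume S - F (f x)) ≠ ⊤ := (tsub_le_self.trans_lt hfin).ne
        rw [← ENNReal.ofReal_toReal h5]
        apply ENNReal.ofReal_le_ofReal
        rw [ENNReal.toReal_sub_of_le hFleV hVne]
        exact le_max_right _ _
      · have hempty : {x' | f x ≤ f x' ∧ f x' < f m} = (∅ : Set (Fin d → ℝ)) := by
          ext x'
          simp only [mem_setOf_eq, mem_empty_iff_false, iff_false, not_and]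
          intro h1 h2
          exact hxa (lt_of_le_of_lt h1 h2)
        have hz : ψ x = 0 := by
          show volume {x' | f x ≤ f x' ∧ f x' < f m} = 0
          rw [hempty]
          exact measure_empty
        rw [hz]
        exact (zero_le)
    have hfinM : ∫⁻ x, ENNReal.ofReal (Mx x) ∂P ≠ ⊤ := by
      have hMle : ∀ x, ENNReal.ofReal (Mx x) ≤ ENNReal.ofReal (volume S).toReal := by
        intro x
        apply ENNReal.ofReal_le_ofReal
        rw [hMxdef]
        apply max_le ENNReal.toReal_nonneg
        simp [ENNReal.toReal_nonneg]
      have : ∫⁻ x, ENNReal.ofReal (Mx x) ∂P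
          ≤ ENNReal.ofReal (volume S).toReal * P univ := by
        calc ∫⁻ x, ENNReal.ofReal (Mx x) ∂P
            ≤ ∫⁻ _x, ENNReal.ofReal (volume S).toReal ∂P := lintegral_mono hMle
        _ = ENNReal.ofReal (volume S).toReal * P univ := lintegral_const _
      exact (this.trans_lt (ENNReal.mul_lt_top ENNReal.ofReal_lt_top hPuniv)).ne
    show Kc * p ^ 2 / 2 ≤ ∫ x, Mx x ∂P
    rw [hint_eq]
    have hle2 := ENNReal.toReal_mono hfinM (le_trans hmain (lintegral_mono hψle))
    rwa [ENNReal.toReal_ofReal (by positivity)] at hle2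
end

section
/- Let f : ℝ^d → ℝ be measurable with all level sets of Lebesgue measure zero, and let m ∈ ℝ^d be a p-critical point such that the success probabilities decay summably along geometric step-size sequences: ∑_{k=0}^∞ p_f^≤(m, e^{k·c_-}) < ∞. Then for every ρ < 1 there exists K ∈ ℕ such that the (1+1)-ES started from the initial state m^(0) = m, σ^(0) = e^{K·c_-} satisfies Pr(m^(t) = m for all t ∈ ℕ) ≥ ρ; in particular the algorithm converges to m with probability at least ρ. -/
open MeasureTheory Set Filter

/-- Isotropic Gaussian measure `N(m, σ²I)` on `ℝ^d`, defined by its density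
`x ↦ (2π)^{-d/2} σ^{-d} exp(−‖x−m‖²/(2σ²))` w.r.t. Lebesgue measure. -/
noncomputable def gaussES (d : ℕ) (m : EuclideanSpace ℝ (Fin d)) (σ : ℝ) :
    Measure (EuclideanSpace ℝ (Fin d)) :=
  volume.withDensity fun x =>
    ENNReal.ofReal ((2 * Real.pi) ^ (-(d : ℝ) / 2) * (σ ^ d)⁻¹ *
      Real.exp (-‖x - m‖ ^ 2 / (2 * σ ^ 2)))

/-- Success probability of strict improvement: `p_f^<(m,σ)`. -/
noncomputable def pLt (d : ℕ) (f : EuclideanSpace ℝ (Fin d) → ℝ)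
    (m : EuclideanSpace ℝ (Fin d)) (σ : ℝ) : ENNReal :=
  gaussES d m σ {x | f x < f m}

/-- Success probability of weak improvement: `p_f^≤(m,σ)`. -/
noncomputable def pLe (d : ℕ) (f : EuclideanSpace ℝ (Fin d) → ℝ)
    (m : EuclideanSpace ℝ (Fin d)) (σ : ℝ) : ENNReal :=
  gaussES d m σ {x | f x ≤ f m}

/-- Lower step-size threshold `ξ_p^f(m) = inf {σ > 0 | p_f^<(m,σ) ≤ p}`, with `inf ∅ = ∞`. -/
noncomputable def xiES (d : ℕ) (f : EuclideanSpace ℝ (Fin d) → ℝ) (p : ℝ)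
    (m : EuclideanSpace ℝ (Fin d)) : ENNReal :=
  sInf {s : ENNReal | ∃ σ : ℝ, 0 < σ ∧ s = ENNReal.ofReal σ ∧ pLt d f m σ ≤ ENNReal.ofReal p}

/-- Upper step-size threshold `η_p^f(m) = sup {σ > 0 | p_f^≤(m,σ) ≥ p}`, with `sup ∅ = 0`. -/
noncomputable def etaES (d : ℕ) (f : EuclideanSpace ℝ (Fin d) → ℝ) (p : ℝ)
    (m : EuclideanSpace ℝ (Fin d)) : ENNReal :=
  sSup {s : ENNReal | ∃ σ : ℝ, 0 < σ ∧ s = ENNReal.ofReal σ ∧ ENNReal.ofReal p ≤ pLe d f m σ}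

lemma gaussES_dens_meas (d : ℕ) (m : EuclideanSpace ℝ (Fin d)) (σ : ℝ) :
    Measurable fun x : EuclideanSpace ℝ (Fin d) =>
      ENNReal.ofReal ((2 * Real.pi) ^ (-(d : ℝ) / 2) * (σ ^ d)⁻¹ *
        Real.exp (-‖x - m‖ ^ 2 / (2 * σ ^ 2))) := by
  fun_prop

lemma gaussES_map (d : ℕ) (m : EuclideanSpace ℝ (Fin d)) {σ : ℝ} (hσ : 0 < σ) :
    (gaussES d 0 1).map (fun x => m + σ • x) = gaussES d m σ := by
  have hsm : Measurable fun x : EuclideanSpace ℝ (Fin d) => σ • x :=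
    measurable_id.const_smul σ
  have hT : Measurable fun x : EuclideanSpace ℝ (Fin d) => m + σ • x :=
    measurable_const.add hsm
  have hσd : (0:ℝ) < σ ^ d := pow_pos hσ d
  have hvol : (volume : Measure (EuclideanSpace ℝ (Fin d))).map (fun x => m + σ • x)
      = ENNReal.ofReal ((σ ^ d)⁻¹) • volume := by
    have h1 : (fun x : EuclideanSpace ℝ (Fin d) => m + σ • x)
        = (fun x : EuclideanSpace ℝ (Fin d) => m + x) ∘ (σ • ·) := rfl
    rw [h1, ← Measure.map_map (measurable_const_add m) hsm,
      MeasureTheory.Measure.map_addHaar_smul volume hσ.ne', Measure.map_smul,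
      MeasureTheory.map_add_left_eq_self]
    congr 1
    rw [finrank_euclideanSpace_fin, abs_of_pos (by positivity)]
  have hvol' : (volume : Measure (EuclideanSpace ℝ (Fin d)))
      = ENNReal.ofReal (σ ^ d) • (volume : Measure (EuclideanSpace ℝ (Fin d))).map
        (fun x => m + σ • x) := by
    rw [hvol, smul_smul, ← ENNReal.ofReal_mul hσd.le, mul_inv_cancel₀ hσd.ne',
      ENNReal.ofReal_one, one_smul]
  ext s hs
  rw [Measure.map_apply hT hs]
  unfold gaussES
  rw [withDensity_apply _ (hT hs), withDensity_apply _ hs]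
  conv_rhs => rw [hvol']
  rw [Measure.restrict_smul, lintegral_smul_measure, Measure.restrict_map hT hs,
    lintegral_map (gaussES_dens_meas d m σ) hT]
  have hc : Measurable fun a : EuclideanSpace ℝ (Fin d) =>
      ENNReal.ofReal ((2 * Real.pi) ^ (-(d : ℝ) / 2) * (σ ^ d)⁻¹ *
        Real.exp (-‖m + σ • a - m‖ ^ 2 / (2 * σ ^ 2))) := (gaussES_dens_meas d m σ).comp hT
  rw [smul_eq_mul, ← lintegral_const_mul _ hc]
  refine lintegral_congr fun x => ?_
  rw [← ENNReal.ofReal_mul hσd.le]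
  congr 1
  have hn : ‖m + σ • x - m‖ = σ * ‖x‖ := by
    rw [add_sub_cancel_left, norm_smul, Real.norm_eq_abs, abs_of_pos hσ]
  rw [hn, sub_zero]
  have harg : -(σ * ‖x‖) ^ 2 / (2 * σ ^ 2) = -‖x‖ ^ 2 / (2 * 1 ^ 2) := by
    field_simp
  rw [harg]
  field_simp; simp

lemma success_prob (d : ℕ) {f : EuclideanSpace ℝ (Fin d) → ℝ} (hf : Measurable f)
    (m : EuclideanSpace ℝ (Fin d)) {Ω : Type*} [MeasurableSpace Ω] (μ : Measure Ω)
    {ζ : Ω → EuclideanSpace ℝ (Fin d)} (hζ : Measurable ζ) (hlaw : μ.map ζ = gaussES d 0 1)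
    {σ : ℝ} (hσ : 0 < σ) :
    μ {ω | f (m + σ • ζ ω) ≤ f m} = pLe d f m σ := by
  have hS : MeasurableSet {x : EuclideanSpace ℝ (Fin d) | f x ≤ f m} :=
    measurableSet_le hf measurable_const
  have hT : Measurable fun x : EuclideanSpace ℝ (Fin d) => m + σ • x :=
    measurable_const.add (measurable_id.const_smul σ)
  have h1 : {ω | f (m + σ • ζ ω) ≤ f m}
      = (fun ω => m + σ • ζ ω) ⁻¹' {x | f x ≤ f m} := rfl
  have hmeas : Measurable fun ω => m + σ • ζ ω := measurable_const.add (hζ.const_smul σ)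
  rw [h1, ← Measure.map_apply hmeas hS]
  have h2 : (fun ω => m + σ • ζ ω) = (fun x => m + σ • x) ∘ ζ := rfl
  rw [h2, ← Measure.map_map hT hζ, hlaw, gaussES_map d m hσ]
  rfl

/-- Premature convergence at a `p`-critical point. Let `f` be
measurable with Lebesgue-null level sets and let `m` be `p`-critical
(`ξ_p^f(m) = 0` for every `p > 0`) with summable success probabilities along the
geometric step-size sequence: `∑_k p_f^≤(m, e^{k·c_-}) < ∞`. Then for every `ρ < 1`
there is `K ∈ ℕ` such that the (1+1)-ES started at `m⁰ = m`, `σ⁰ = e^{K·c₋}`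
stays at `m` forever with probability at least `ρ`. -/
theorem premature_convergence
    (d : ℕ) (hd : 1 ≤ d)
    (cp cm : ℝ) (hcp : 0 < cp) (hcm : cm < 0) (hcpm : -cm < cp)
    (f : EuclideanSpace ℝ (Fin d) → ℝ) (hf : Measurable f)
    (hlevel : ∀ y : ℝ, volume {x : EuclideanSpace ℝ (Fin d) | f x = y} = 0)
    (m : EuclideanSpace ℝ (Fin d))
    (hcrit : ∀ p : ℝ, 0 < p → xiES d f p m = 0)
    (hsum : Summable (fun k : ℕ => (pLe d f m (Real.exp (k * cm))).toReal))
    {Ω : Type*} [MeasurableSpace Ω] (μ : Measure Ω) [IsProbabilityMeasure μ]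
    (z : ℕ → Ω → EuclideanSpace ℝ (Fin d))
    (hzmeas : ∀ t, Measurable (z t))
    (hzindep : ProbabilityTheory.iIndepFun z μ)
    (hzlaw : ∀ t, μ.map (z t) = gaussES d 0 1) :
    ∀ ρ : ℝ, ρ < 1 → ∃ K : ℕ,
      ∀ (mm : ℕ → Ω → EuclideanSpace ℝ (Fin d)) (ss : ℕ → Ω → ℝ),
        (∀ ω, mm 0 ω = m) → (∀ ω, ss 0 ω = Real.exp (K * cm)) →
        (∀ (t : ℕ) (ω : Ω),
          (f (mm t ω + ss t ω • z t ω) ≤ f (mm t ω) →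
            mm (t + 1) ω = mm t ω + ss t ω • z t ω ∧ ss (t + 1) ω = ss t ω * Real.exp cp) ∧
          (¬ f (mm t ω + ss t ω • z t ω) ≤ f (mm t ω) →
            mm (t + 1) ω = mm t ω ∧ ss (t + 1) ω = ss t ω * Real.exp cm)) →
        ENNReal.ofReal ρ ≤ μ {ω | ∀ t : ℕ, mm t ω = m} := by
  intro ρ hρ
  set g : ℕ → ℝ := fun k => (pLe d f m (Real.exp (k * cm))).toReal with hg
  set ρ' : ℝ := max ρ 0 with hρ'def
  have hρ'lt : ρ' < 1 := max_lt hρ one_pos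
  have hε : (0:ℝ) < 1 - ρ' := by linarith
  obtain ⟨K, hK⟩ : ∃ K : ℕ, ∑' t : ℕ, g (t + K) < 1 - ρ' :=
    ((_root_.tendsto_sum_nat_add g).eventually_lt_const hε).exists
  refine ⟨K, ?_⟩
  intro mm ss h0m h0s hrec
  -- the "success at time t" events
  set B : ℕ → Set Ω := fun t =>
    {ω | f (m + Real.exp (((t + K : ℕ) : ℝ) * cm) • z t ω) ≤ f m} with hBdef
  have hσpos : ∀ t : ℕ, (0:ℝ) < Real.exp (((t + K : ℕ) : ℝ) * cm) := fun t => Real.exp_pos _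
  have hμB : ∀ t : ℕ, μ (B t) = pLe d f m (Real.exp (((t + K : ℕ) : ℝ) * cm)) := fun t =>
    success_prob d hf m μ (hzmeas t) (hzlaw t) (hσpos t)
  have hBmeas : ∀ t : ℕ, MeasurableSet (B t) := by
    intro t
    have : B t = (fun ω => m + Real.exp (((t + K : ℕ) : ℝ) * cm) • z t ω) ⁻¹'
        {x | f x ≤ f m} := rfl
    rw [this]
    exact (show Measurable (fun ω => m + Real.exp (((t + K : ℕ) : ℝ) * cm) • z t ω) from
      measurable_const.add ((hzmeas t).const_smul (Real.exp (((t + K : ℕ) : ℝ) * cm)))) (measurableSet_le hf measurable_const)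
  -- on the complement of all B t, the chain stays at m
  have hstay : ∀ ω : Ω, (∀ t, ω ∉ B t) → ∀ t : ℕ,
      mm t ω = m ∧ ss t ω = Real.exp (((t + K : ℕ) : ℝ) * cm) := by
    intro ω hω t
    induction t with
    | zero => exact ⟨h0m ω, by rw [h0s ω]; norm_num⟩
    | succ t ih =>
      have hns : ¬ f (mm t ω + ss t ω • z t ω) ≤ f (mm t ω) := by
        rw [ih.1, ih.2]; exact hω t
      obtain ⟨h1, h2⟩ := (hrec t ω).2 hns
      refine ⟨h1.trans ih.1, ?_⟩
      rw [h2, ih.2, ← Real.exp_add]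
      congr 1
      push_cast
      ring
  have hsub : (⋃ t, B t)ᶜ ⊆ {ω | ∀ t : ℕ, mm t ω = m} := by
    intro ω hω
    simp only [compl_iUnion, mem_iInter, mem_compl_iff] at hω
    exact fun t => (hstay ω hω t).1
  -- bound the measure of the union
  have htail_nonneg : ∀ t : ℕ, 0 ≤ g (t + K) := fun t => ENNReal.toReal_nonneg
  have htail_sum : Summable fun t : ℕ => g (t + K) := (summable_nat_add_iff K).mpr hsum
  have hunion : μ (⋃ t, B t) ≤ ENNReal.ofReal (∑' t : ℕ, g (t + K)) := by
    calc μ (⋃ t, B t) ≤ ∑' t : ℕ, μ (B t) := measure_iUnion_le _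
      _ = ∑' t : ℕ, ENNReal.ofReal (g (t + K)) := by
          refine tsum_congr fun t => ?_
          rw [hμB t, hg, ENNReal.ofReal_toReal (by rw [← hμB t]; exact measure_ne_top μ _)]
      _ = ENNReal.ofReal (∑' t : ℕ, g (t + K)) :=
          (ENNReal.ofReal_tsum_of_nonneg htail_nonneg htail_sum).symm
  have hcompl : μ ((⋃ t, B t)ᶜ) = 1 - μ (⋃ t, B t) :=
    prob_compl_eq_one_sub (MeasurableSet.iUnion hBmeas)
  have hfin : ENNReal.ofReal ρ' + μ (⋃ t, B t) ≤ 1 := by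
    calc ENNReal.ofReal ρ' + μ (⋃ t, B t)
        ≤ ENNReal.ofReal ρ' + ENNReal.ofReal (∑' t : ℕ, g (t + K)) := by
          exact add_le_add_right hunion _
      _ = ENNReal.ofReal (ρ' + ∑' t : ℕ, g (t + K)) :=
          (ENNReal.ofReal_add (le_max_right ρ 0) (tsum_nonneg htail_nonneg)).symm
      _ ≤ 1 := by
          rw [← ENNReal.ofReal_one]
          exact ENNReal.ofReal_le_ofReal (by linarith)
  calc ENNReal.ofReal ρ ≤ ENNReal.ofReal ρ' := ENNReal.ofReal_le_ofReal (le_max_left ρ 0)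
    _ ≤ 1 - μ (⋃ t, B t) :=
        ENNReal.le_sub_of_add_le_right (measure_ne_top μ _) hfin
    _ = μ ((⋃ t, B t)ᶜ) := hcompl.symm
    _ ≤ μ {ω | ∀ t : ℕ, mm t ω = m} := measure_mono hsub
end
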